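/- Let δ > 0, let t : Fin n → ℝ be strictly increasing (initial configuration), and let x : Fin n → ℝ be strictly increasing with x (k+1) − x k ≥ δ for all consecutive indices. Suppose that for every maximal chain of x with index interval [i, j] and every l with i ≤ l ≤ j, the suffix S = {l, …, j} satisfies |{k ∈ S : x k < t k}| ≤ |{k ∈ S : x k ≥ t k}|. Let y : Fin n → ℝ be any δ-independent, strictly increasing configuration with y k ≥ x k for all k. Then Σ_k |t k − x k| ≤ Σ_k |t k − y k|. (Among order-preserving independent configurations lying pointwise to the right of x, the configuration x has minimal total movement.) -/

import Mathlib

/-- The indices `i ≤ j` delimit a chain of the configuration `x`: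
consecutive points with indices in `[i, j]` are at distance exactly `δ`. -/
def IsChainInterval {n : ℕ} (δ : ℝ) (x : Fin n → ℝ) (i j : Fin n) : Prop :=
  i ≤ j ∧ ∀ (k : ℕ) (_hik : (i : ℕ) ≤ k) (hkj : k < (j : ℕ)),
    x ⟨k + 1, Nat.lt_of_le_of_lt hkj j.isLt⟩ - x ⟨k, Nat.lt_trans hkj j.isLt⟩ = δ

/-- The chain delimited by `i ≤ j` is maximal: it cannot be extended to the
left nor to the right. -/
def IsMaximalChain {n : ℕ} (δ : ℝ) (x : Fin n → ℝ) (i j : Fin n) : Prop :=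
  IsChainInterval δ x i j ∧
    ((i : ℕ) = 0 ∨
      ∃ h : (i : ℕ) - 1 < n, x i - x ⟨(i : ℕ) - 1, h⟩ > δ) ∧
    ((j : ℕ) + 1 = n ∨
      ∃ h : (j : ℕ) + 1 < n, x ⟨(j : ℕ) + 1, h⟩ - x j > δ)

namespace OptAux


open Finset

variable {n : ℕ}

def GapEq (δ : ℝ) (x : Fin n → ℝ) (r : ℕ) : Prop :=
  ∀ h : r + 1 < n, x ⟨r + 1, h⟩ - x ⟨r, Nat.lt_of_succ_lt h⟩ = δ

open Classical in
noncomputable def chainSetE (δ : ℝ) (x : Fin n → ℝ) (k : Fin n) : Finset (Fin n) :=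
  Finset.univ.filter fun m => k ≤ m ∧ ∀ r : ℕ, (k : ℕ) ≤ r → r < (m : ℕ) → GapEq δ x r

open Classical in
noncomputable def chainSetS (δ : ℝ) (x : Fin n → ℝ) (k : Fin n) : Finset (Fin n) :=
  Finset.univ.filter fun m => m ≤ k ∧ ∀ r : ℕ, (m : ℕ) ≤ r → r < (k : ℕ) → GapEq δ x r

lemma mem_chainSetE {δ : ℝ} {x : Fin n → ℝ} {k m : Fin n} :
    m ∈ chainSetE δ x k ↔ k ≤ m ∧ ∀ r : ℕ, (k : ℕ) ≤ r → r < (m : ℕ) → GapEq δ x r := by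
  simp [chainSetE]

lemma mem_chainSetS {δ : ℝ} {x : Fin n → ℝ} {k m : Fin n} :
    m ∈ chainSetS δ x k ↔ m ≤ k ∧ ∀ r : ℕ, (m : ℕ) ≤ r → r < (k : ℕ) → GapEq δ x r := by
  simp [chainSetS]

lemma chainSetE_nonempty (δ : ℝ) (x : Fin n → ℝ) (k : Fin n) : (chainSetE δ x k).Nonempty :=
  ⟨k, mem_chainSetE.mpr ⟨le_refl k, fun _ h1 h2 => absurd h2 (by omega)⟩⟩

lemma chainSetS_nonempty (δ : ℝ) (x : Fin n → ℝ) (k : Fin n) : (chainSetS δ x k).Nonempty :=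
  ⟨k, mem_chainSetS.mpr ⟨le_refl k, fun _ h1 h2 => absurd h2 (by omega)⟩⟩

noncomputable def chainEnd (δ : ℝ) (x : Fin n → ℝ) (k : Fin n) : Fin n :=
  (chainSetE δ x k).max' (chainSetE_nonempty δ x k)

noncomputable def chainStart (δ : ℝ) (x : Fin n → ℝ) (k : Fin n) : Fin n :=
  (chainSetS δ x k).min' (chainSetS_nonempty δ x k)

lemma chainEnd_spec (δ : ℝ) (x : Fin n → ℝ) (k : Fin n) :
    k ≤ chainEnd δ x k ∧
      ∀ r : ℕ, (k : ℕ) ≤ r → r < ((chainEnd δ x k) : ℕ) → GapEq δ x r :=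
  mem_chainSetE.mp (Finset.max'_mem _ _)

lemma chainStart_spec (δ : ℝ) (x : Fin n → ℝ) (k : Fin n) :
    chainStart δ x k ≤ k ∧
      ∀ r : ℕ, ((chainStart δ x k) : ℕ) ≤ r → r < (k : ℕ) → GapEq δ x r :=
  mem_chainSetS.mp (Finset.min'_mem _ _)

lemma le_chainEnd {δ : ℝ} {x : Fin n → ℝ} {k m : Fin n}
    (h1 : k ≤ m) (h2 : ∀ r : ℕ, (k : ℕ) ≤ r → r < (m : ℕ) → GapEq δ x r) :
    m ≤ chainEnd δ x k :=
  Finset.le_max' _ _ (mem_chainSetE.mpr ⟨h1, h2⟩)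

lemma chainStart_le {δ : ℝ} {x : Fin n → ℝ} {k m : Fin n}
    (h1 : m ≤ k) (h2 : ∀ r : ℕ, (m : ℕ) ≤ r → r < (k : ℕ) → GapEq δ x r) :
    chainStart δ x k ≤ m :=
  Finset.min'_le _ _ (mem_chainSetS.mpr ⟨h1, h2⟩)

lemma chainEnd_congr {δ : ℝ} {x : Fin n → ℝ} {k m : Fin n}
    (hkm : k ≤ m) (hme : m ≤ chainEnd δ x k) : chainEnd δ x m = chainEnd δ x k := by
  obtain ⟨hk1, hk2⟩ := chainEnd_spec δ x k
  obtain ⟨hm1, hm2⟩ := chainEnd_spec δ x m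
  apply le_antisymm
  · exact le_chainEnd (le_trans hkm hm1)
      (fun r h1 h2 => by
        rcases Nat.lt_or_ge r (m : ℕ) with h | h
        · exact hk2 r h1 (lt_of_lt_of_le h (Fin.le_def.mp hme))
        · exact hm2 r h h2)
  · exact le_chainEnd hme (fun r h1 h2 => hk2 r (le_trans (Fin.le_def.mp hkm) h1) h2)


-- maximality on the right
lemma chainEnd_succ {δ : ℝ} {x : Fin n → ℝ}
    (hgap : ∀ (k : ℕ) (h : k + 1 < n),
      x ⟨k + 1, h⟩ - x ⟨k, Nat.lt_of_succ_lt h⟩ ≥ δ) (k : Fin n) :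
    ((chainEnd δ x k : ℕ) + 1 = n) ∨
      ∃ h : (chainEnd δ x k : ℕ) + 1 < n,
        x ⟨(chainEnd δ x k : ℕ) + 1, h⟩ - x (chainEnd δ x k) > δ := by
  set e := chainEnd δ x k with he
  by_cases h0 : (e : ℕ) + 1 = n
  · exact Or.inl h0
  · have hlt : (e : ℕ) + 1 < n := by have := e.isLt; omega
    refine Or.inr ⟨hlt, ?_⟩
    by_contra hle
    push_neg at hle
    have heq : x ⟨(e : ℕ) + 1, hlt⟩ - x e = δ := le_antisymm hle (by
      have := hgap (e : ℕ) hlt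
      have hee : (⟨(e : ℕ), Nat.lt_of_succ_lt hlt⟩ : Fin n) = e := Fin.ext rfl
      rw [hee] at this; exact this)
    have hgeq : GapEq δ x (e : ℕ) := by
      intro h'
      have hee : (⟨(e : ℕ), Nat.lt_of_succ_lt h'⟩ : Fin n) = e := Fin.ext rfl
      rw [hee]; exact heq
    obtain ⟨hk1, hk2⟩ := chainEnd_spec δ x k
    have hmem : (⟨(e : ℕ) + 1, hlt⟩ : Fin n) ≤ e := by
      apply le_chainEnd (le_trans hk1 (Fin.le_def.mpr (by rw [← he]; simp)))
      intro r h1 h2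
      simp only at h2
      rcases Nat.lt_or_ge r (e : ℕ) with h | h
      · exact hk2 r h1 h
      · have : r = (e : ℕ) := by omega
        subst this; exact hgeq
    rw [Fin.le_def] at hmem
    simp at hmem
lemma chainStart_pred {δ : ℝ} {x : Fin n → ℝ}
    (hgap : ∀ (k : ℕ) (h : k + 1 < n),
      x ⟨k + 1, h⟩ - x ⟨k, Nat.lt_of_succ_lt h⟩ ≥ δ) (k : Fin n) :
    ((chainStart δ x k : ℕ) = 0) ∨
      ∃ h : (chainStart δ x k : ℕ) - 1 < n,
        x (chainStart δ x k) - x ⟨(chainStart δ x k : ℕ) - 1, h⟩ > δ := by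
  set s := chainStart δ x k with hs
  by_cases h0 : (s : ℕ) = 0
  · exact Or.inl h0
  · have hlt : (s : ℕ) - 1 < n := by have := s.isLt; omega
    refine Or.inr ⟨hlt, ?_⟩
    by_contra hle
    push_neg at hle
    have hlt' : ((s : ℕ) - 1) + 1 < n := by have := s.isLt; omega
    have hseq : (⟨(s : ℕ) - 1 + 1, hlt'⟩ : Fin n) = s := Fin.ext (by simp; omega)
    have heq : x s - x ⟨(s : ℕ) - 1, hlt⟩ = δ := le_antisymm hle (by
      have := hgap ((s : ℕ) - 1) hlt'
      rw [hseq] at this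
      convert this using 3)
    have hgeq : GapEq δ x ((s : ℕ) - 1) := by
      intro h'
      rw [hseq]
      convert heq using 3
    obtain ⟨hk1, hk2⟩ := chainStart_spec δ x k
    have hmem : s ≤ (⟨(s : ℕ) - 1, hlt⟩ : Fin n) := by
      apply chainStart_le (le_trans (Fin.le_def.mpr (by rw [← hs]; simp)) hk1)
      intro r h1 h2
      simp only at h1
      rcases Nat.lt_or_ge r (s : ℕ) with h | h
      · have : r = (s : ℕ) - 1 := by omega
        subst this; exact hgeq
      · exact hk2 r h h2
    rw [Fin.le_def] at hmem
    simp at hmem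
    omega

lemma isMaximalChain {δ : ℝ} {x : Fin n → ℝ}
    (hgap : ∀ (k : ℕ) (h : k + 1 < n),
      x ⟨k + 1, h⟩ - x ⟨k, Nat.lt_of_succ_lt h⟩ ≥ δ) (k : Fin n) :
    IsMaximalChain δ x (chainStart δ x k) (chainEnd δ x k) := by
  obtain ⟨he1, he2⟩ := chainEnd_spec δ x k
  obtain ⟨hs1, hs2⟩ := chainStart_spec δ x k
  refine ⟨⟨le_trans hs1 he1, ?_⟩, chainStart_pred hgap k, chainEnd_succ hgap k⟩
  intro r h1 h2
  rcases Nat.lt_or_ge r (k : ℕ) with h | h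
  · exact hs2 r h1 h _
  · exact he2 r h h2 _

-- telescoping
lemma telescope_eq (δ : ℝ) (x : Fin n → ℝ) :
    ∀ (j : ℕ) (a b : Fin n), (b : ℕ) = (a : ℕ) + j →
      (∀ r : ℕ, (a : ℕ) ≤ r → r < (b : ℕ) → GapEq δ x r) → x b - x a = j * δ := by
  intro j
  induction j with
  | zero =>
    intro a b hb _
    have : b = a := Fin.ext (by omega)
    rw [this]; simp
  | succ j ih =>
    intro a b hb hg
    have hc : (a : ℕ) + j < n := by have := b.isLt; omega
    have hc1 : (a : ℕ) + j + 1 < n := by have := b.isLt; omega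
    have h1 : x ⟨(a : ℕ) + j, hc⟩ - x a = j * δ :=
      ih a ⟨(a : ℕ) + j, hc⟩ rfl (fun r hr1 hr2 => hg r hr1 (by simp at hr2 ⊢; omega))
    have h2 : x ⟨(a : ℕ) + j + 1, hc1⟩ - x ⟨(a : ℕ) + j, hc⟩ = δ := by
      have := hg ((a : ℕ) + j) (by omega) (by omega) hc1
      convert this using 3
    have hbeq : b = ⟨(a : ℕ) + j + 1, hc1⟩ := Fin.ext (by show (b:ℕ) = (a:ℕ)+j+1; omega)
    rw [hbeq]
    push_cast
    linarith

lemma telescope_ge (δ : ℝ) (y : Fin n → ℝ)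
    (hstep : ∀ (r : ℕ) (h : r + 1 < n),
      y ⟨r + 1, h⟩ - y ⟨r, Nat.lt_of_succ_lt h⟩ ≥ δ) :
    ∀ (j : ℕ) (a b : Fin n), (b : ℕ) = (a : ℕ) + j → y b - y a ≥ j * δ := by
  intro j
  induction j with
  | zero =>
    intro a b hb
    have : b = a := Fin.ext (by omega)
    rw [this]; simp
  | succ j ih =>
    intro a b hb
    have hc : (a : ℕ) + j < n := by have := b.isLt; omega
    have hc1 : (a : ℕ) + j + 1 < n := by have := b.isLt; omega
    have h1 : y ⟨(a : ℕ) + j, hc⟩ - y a ≥ j * δ := ih a ⟨(a : ℕ) + j, hc⟩ rfl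
    have h2 : y ⟨(a : ℕ) + j + 1, hc1⟩ - y ⟨(a : ℕ) + j, hc⟩ ≥ δ := by
      have := hstep ((a : ℕ) + j) hc1
      convert this using 3
    have hbeq : b = ⟨(a : ℕ) + j + 1, hc1⟩ := Fin.ext (by show (b:ℕ) = (a:ℕ)+j+1; omega)
    rw [hbeq]
    push_cast
    linarith


lemma d_mono {δ : ℝ} {x y : Fin n → ℝ}
    (ystep : ∀ (r : ℕ) (h : r + 1 < n),
      y ⟨r + 1, h⟩ - y ⟨r, Nat.lt_of_succ_lt h⟩ ≥ δ)
    {k m : Fin n} (hkm : k ≤ m) (hme : m ≤ chainEnd δ x k) :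
    y k - x k ≤ y m - x m := by
  obtain ⟨-, hk2⟩ := chainEnd_spec δ x k
  have hj : (m : ℕ) = (k : ℕ) + ((m : ℕ) - (k : ℕ)) := by
    have := Fin.le_def.mp hkm; omega
  have hxeq : x m - x k = (((m : ℕ) - (k : ℕ) : ℕ) : ℝ) * δ :=
    telescope_eq δ x _ k m hj
      (fun r h1 h2 => hk2 r h1 (lt_of_lt_of_le h2 (Fin.le_def.mp hme)))
  have hyge : y m - y k ≥ (((m : ℕ) - (k : ℕ) : ℕ) : ℝ) * δ := telescope_ge δ y ystep _ k m hj
  linarith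

end OptAux

open Finset in
/-- If every suffix of every maximal chain of `x` satisfies Property 2
(|L| ≤ |O| + |R|), then `x` has minimal total movement among all
order-preserving independent configurations lying pointwise to its right. -/
theorem optimal_among_rightward (n : ℕ) (δ : ℝ) (hδ : 0 < δ)
    (t : Fin n → ℝ) (ht : StrictMono t)
    (x : Fin n → ℝ) (hx : StrictMono x)
    (hgap : ∀ (k : ℕ) (h : k + 1 < n),
      x ⟨k + 1, h⟩ - x ⟨k, Nat.lt_of_succ_lt h⟩ ≥ δ)
    (hsuffix : ∀ i j : Fin n, IsMaximalChain δ x i j →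
      ∀ l : Fin n, i ≤ l → l ≤ j →
        ((Finset.Icc l j).filter (fun k => x k < t k)).card
          ≤ ((Finset.Icc l j).filter (fun k => t k ≤ x k)).card)
    (y : Fin n → ℝ) (hy : StrictMono y)
    (hyind : ∀ a b : Fin n, a ≠ b → |y a - y b| ≥ δ)
    (hxy : ∀ k : Fin n, x k ≤ y k) :
    ∑ k, |t k - x k| ≤ ∑ k, |t k - y k| := by
  classical
  set d : Fin n → ℝ := fun k => y k - x k with hd
  have hd0 : ∀ k, 0 ≤ d k := fun k => sub_nonneg.mpr (hxy k)
  have ystep : ∀ (r : ℕ) (h : r + 1 < n),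
      y ⟨r + 1, h⟩ - y ⟨r, Nat.lt_of_succ_lt h⟩ ≥ δ := by
    intro r h
    have hlt : (⟨r, Nat.lt_of_succ_lt h⟩ : Fin n) < ⟨r + 1, h⟩ := by
      rw [Fin.lt_def]; simp
    have h1 := hy hlt
    have h2 := hyind ⟨r + 1, h⟩ ⟨r, Nat.lt_of_succ_lt h⟩ (by simp [Fin.ext_iff])
    rw [abs_of_pos (by linarith)] at h2
    exact h2
  have key : ∑ k ∈ univ.filter (fun k => x k < t k), d k
      ≤ ∑ k ∈ univ.filter (fun k => t k ≤ x k), d k := by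
    set T : {k : Fin n // x k < t k} → Finset (Fin n) :=
      fun a => (Finset.Icc a.1 (OptAux.chainEnd δ x a.1)).filter (fun m => t m ≤ x m) with hT
    have hTend : ∀ (a : {k : Fin n // x k < t k}), ∀ m ∈ T a,
        OptAux.chainEnd δ x m = OptAux.chainEnd δ x a.1 := by
      intro a m hm
      simp only [hT, Finset.mem_filter, Finset.mem_Icc] at hm
      exact OptAux.chainEnd_congr hm.1.1 hm.1.2
    have hall : ∀ s : Finset {k : Fin n // x k < t k}, s.card ≤ (s.biUnion T).card := by
      intro s
      set g : {k : Fin n // x k < t k} → Fin n := fun a => OptAux.chainEnd δ x a.1 with hg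
      have hsub : s.biUnion T =
          (s.image g).biUnion (fun e => (s.filter fun a => g a = e).biUnion T) := by
        ext m
        simp only [Finset.mem_biUnion, Finset.mem_image, Finset.mem_filter]
        constructor
        · rintro ⟨a, ha, hm⟩
          exact ⟨g a, ⟨a, ha, rfl⟩, a, ⟨ha, rfl⟩, hm⟩
        · rintro ⟨e, -, a, ⟨ha, -⟩, hm⟩
          exact ⟨a, ha, hm⟩
      have hdisj : ∀ e1 ∈ s.image g, ∀ e2 ∈ s.image g, e1 ≠ e2 →
          Disjoint ((s.filter fun a => g a = e1).biUnion T)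
            ((s.filter fun a => g a = e2).biUnion T) := by
        intro e1 _ e2 _ hne
        rw [Finset.disjoint_left]
        rintro m hm1 hm2
        simp only [Finset.mem_biUnion, Finset.mem_filter] at hm1 hm2
        obtain ⟨a1, ⟨-, ha1⟩, hma1⟩ := hm1
        obtain ⟨a2, ⟨-, ha2⟩, hma2⟩ := hm2
        exact hne (((hTend a1 m hma1).trans ha1).symm.trans ((hTend a2 m hma2).trans ha2))
      have fiber : ∀ e ∈ s.image g,
          (s.filter fun a => g a = e).card
            ≤ ((s.filter fun a => g a = e).biUnion T).card := by
        intro e he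
        obtain ⟨a, ha, hae⟩ := Finset.mem_image.mp he
        obtain ⟨a0, ha0, hmin⟩ :=
          Finset.exists_min_image (s.filter fun a => g a = e)
            (fun a : {k : Fin n // x k < t k} => a.1)
            ⟨a, Finset.mem_filter.mpr ⟨ha, hae⟩⟩
        have ha0e : g a0 = e := (Finset.mem_filter.mp ha0).2
        have step1 : (s.filter fun a => g a = e).card
            ≤ ((Finset.Icc a0.1 e).filter fun m => x m < t m).card := by
          apply Finset.card_le_card_of_injOn (fun a => a.1)
          · intro b hb
            have hbe : g b = e := (Finset.mem_filter.mp hb).2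
            have hb1 : b.1 ≤ OptAux.chainEnd δ x b.1 := (OptAux.chainEnd_spec δ x b.1).1
            simp only [Finset.mem_coe, Finset.mem_filter, Finset.mem_Icc]
            exact ⟨⟨hmin b hb, hbe ▸ hb1⟩, b.2⟩
          · exact fun a1 _ a2 _ h12 => Subtype.ext h12
        have step2 : ((Finset.Icc a0.1 e).filter fun m => x m < t m).card
            ≤ ((Finset.Icc a0.1 e).filter fun m => t m ≤ x m).card := by
          have he' : e = OptAux.chainEnd δ x a0.1 := ha0e.symm
          rw [he']
          exact hsuffix (OptAux.chainStart δ x a0.1) (OptAux.chainEnd δ x a0.1)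
            (OptAux.isMaximalChain hgap a0.1) a0.1
            (OptAux.chainStart_spec δ x a0.1).1 (OptAux.chainEnd_spec δ x a0.1).1
        have step3 : ((Finset.Icc a0.1 e).filter fun m => t m ≤ x m).card
            ≤ ((s.filter fun a => g a = e).biUnion T).card := by
          apply Finset.card_le_card
          have hTa0 : T a0 = (Finset.Icc a0.1 e).filter fun m => t m ≤ x m := by
            simp only [hT]
            rw [show OptAux.chainEnd δ x a0.1 = e from ha0e]
          rw [← hTa0]
          exact Finset.subset_biUnion_of_mem T ha0
        omega
      calc s.card = ∑ e ∈ s.image g, (s.filter fun a => g a = e).card :=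
            Finset.card_eq_sum_card_fiberwise (fun a ha => Finset.mem_image_of_mem g ha)
        _ ≤ ∑ e ∈ s.image g, ((s.filter fun a => g a = e).biUnion T).card :=
            Finset.sum_le_sum fiber
        _ = (s.biUnion T).card := by rw [hsub, Finset.card_biUnion hdisj]
    obtain ⟨f, hfinj, hfT⟩ := (Finset.all_card_le_biUnion_card_iff_exists_injective T).mp hall
    have h1 : ∑ k ∈ univ.filter (fun k => x k < t k), d k
        = ∑ a : {k : Fin n // x k < t k}, d a.1 :=
      Finset.sum_subtype _ (fun k => by simp) d
    have h2 : ∑ a : {k : Fin n // x k < t k}, d a.1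
        ≤ ∑ a : {k : Fin n // x k < t k}, d (f a) := by
      apply Finset.sum_le_sum
      intro a _
      have hm := hfT a
      simp only [hT, Finset.mem_filter, Finset.mem_Icc] at hm
      simp only [hd]
      exact OptAux.d_mono ystep hm.1.1 hm.1.2
    have h3 : ∑ a : {k : Fin n // x k < t k}, d (f a)
        = ∑ m ∈ Finset.univ.image f, d m :=
      (Finset.sum_image (fun a _ b _ h12 => hfinj h12)).symm
    have h4 : ∑ m ∈ Finset.univ.image f, d m
        ≤ ∑ k ∈ univ.filter (fun k => t k ≤ x k), d k := by
      apply Finset.sum_le_sum_of_subset_of_nonneg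
      · intro m hm
        obtain ⟨a, -, rfl⟩ := Finset.mem_image.mp hm
        have hma := hfT a
        simp only [hT, Finset.mem_filter] at hma
        exact Finset.mem_filter.mpr ⟨Finset.mem_univ _, hma.2⟩
      · exact fun m _ _ => hd0 m
    linarith
  have main : ∀ k : Fin n, |t k - x k| + (if t k ≤ x k then d k else -d k) ≤ |t k - y k| := by
    intro k
    by_cases h : t k ≤ x k
    · rw [if_pos h]
      have h1 : |t k - x k| = x k - t k := by rw [abs_sub_comm, abs_of_nonneg (by linarith)]
      have h2 : |t k - y k| = y k - t k := by
        rw [abs_sub_comm, abs_of_nonneg (by linarith [hxy k])]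
      simp only [hd]
      linarith
    · rw [if_neg h]
      have h1 : |t k - x k| ≤ |t k - y k| + |y k - x k| := abs_sub_le (t k) (y k) (x k)
      have h2 : |y k - x k| = y k - x k := abs_of_nonneg (by linarith [hxy k])
      simp only [hd]
      linarith
  have hsum := Finset.sum_le_sum (fun k (_ : k ∈ (univ : Finset (Fin n))) => main k)
  rw [Finset.sum_add_distrib] at hsum
  have hite : ∑ k, (if t k ≤ x k then d k else -d k)
      = (∑ k ∈ univ.filter (fun k => t k ≤ x k), d k)
        - ∑ k ∈ univ.filter (fun k => x k < t k), d k := by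
    rw [Finset.sum_ite]
    have hfe : univ.filter (fun k : Fin n => ¬ t k ≤ x k)
        = univ.filter (fun k => x k < t k) := by
      ext m; simp [not_le]
    rw [hfe, Finset.sum_neg_distrib]
    ring
  rw [hite] at hsum
  linarith
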